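/- Let f: ℝⁿ → ℝ be differentiable with ∇f Lipschitz with constant L and hypomonotone with violation τ ≥ 0 on ℝⁿ, i.e. ⟨∇f(x) − ∇f(y), x − y⟩ ≥ −τ‖x−y‖² for all x, y. Then for any step t > 0, the forward operator G := Id − t∇f satisfies ‖Gx − Gy‖² ≤ (1 + 2tτ + t²L²)‖x−y‖² for all x, y; in particular G is almost nonexpansive with violation at most 2tτ + t²L². -/

import Mathlib

/-- If `∇f` is `L`-Lipschitz and hypomonotone with violation `τ ≥ 0`, then the forward
operator `G = Id − t∇f` satisfies `‖Gx − Gy‖² ≤ (1 + 2tτ + t²L²)‖x−y‖²`. -/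
theorem stmt12
    (n : ℕ) (f : EuclideanSpace ℝ (Fin n) → ℝ)
    (hdiff : Differentiable ℝ f)
    (L τ t : ℝ) (hL : 0 ≤ L) (hτ : 0 ≤ τ) (ht : 0 < t)
    (hLip : ∀ x y, ‖gradient f x - gradient f y‖ ≤ L * ‖x - y‖)
    (hhypo : ∀ x y,
      -τ * ‖x - y‖ ^ 2 ≤ inner ℝ (gradient f x - gradient f y) (x - y)) :
    ∀ x y : EuclideanSpace ℝ (Fin n),
      ‖(x - t • gradient f x) - (y - t • gradient f y)‖ ^ 2 ≤
        (1 + 2 * t * τ + t ^ 2 * L ^ 2) * ‖x - y‖ ^ 2 := by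
  intro x y
  have hkey : (x - t • gradient f x) - (y - t • gradient f y)
      = (x - y) - t • (gradient f x - gradient f y) := by
    rw [smul_sub]; abel
  rw [hkey, norm_sub_sq_real]
  have h1 : ‖t • (gradient f x - gradient f y)‖ ^ 2 ≤ t ^ 2 * (L ^ 2 * ‖x - y‖ ^ 2) := by
    rw [norm_smul, mul_pow]
    have := hLip x y
    have h2 : ‖gradient f x - gradient f y‖ ^ 2 ≤ (L * ‖x - y‖) ^ 2 := by
      apply pow_le_pow_left₀ (norm_nonneg _) this
    calc ‖t‖ ^ 2 * ‖gradient f x - gradient f y‖ ^ 2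
        ≤ ‖t‖ ^ 2 * (L * ‖x - y‖) ^ 2 := by
          exact mul_le_mul_of_nonneg_left h2 (by positivity)
      _ = t ^ 2 * (L ^ 2 * ‖x - y‖ ^ 2) := by rw [Real.norm_eq_abs, sq_abs]; ring
  have h3 : (inner ℝ (x - y) (t • (gradient f x - gradient f y)) : ℝ)
      = t * inner ℝ (gradient f x - gradient f y) (x - y) := by
    rw [real_inner_smul_right, real_inner_comm]
  have h4 : -(t * τ * ‖x - y‖ ^ 2) ≤ t * inner ℝ (gradient f x - gradient f y) (x - y) := by
    have := hhypo x y
    nlinarith [this]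
  rw [h3]
  nlinarith [h1, h4]
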